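/- With Φ_k as above, every maximal unlinked set in F_p^{2k} has cardinality exactly p^k. -/

import Mathlib

open Finset

def Phik (p k : ℕ) (u v : Fin k → ZMod p × ZMod p) : ZMod p :=
  ∑ i, (u i).1 * ((v i).2 - (u i).2)

def Unlinked (p k : ℕ) (U : Set (Fin k → ZMod p × ZMod p)) : Prop :=
  ∀ u ∈ U, ∀ v ∈ U, Phik p k u v = 0

def MaximalUnlinked (p k : ℕ) (U : Set (Fin k → ZMod p × ZMod p)) : Prop :=
  Unlinked p k U ∧ ∀ U', Unlinked p k U' → U ⊆ U' → U' = U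

section Aux

variable (p k : ℕ)

/-- first components -/
def xc (u : Fin k → ZMod p × ZMod p) : Fin k → ZMod p := fun i => (u i).1

/-- second components -/
def yc (u : Fin k → ZMod p × ZMod p) : Fin k → ZMod p := fun i => (u i).2

/-- The dot product bilinear form on `Fin k → ZMod p`. -/
noncomputable def dotB : LinearMap.BilinForm (ZMod p) (Fin k → ZMod p) :=
  LinearMap.mk₂ (ZMod p) (fun x y => ∑ i, x i * y i)
    (fun x x' y => by simp [add_mul, Finset.sum_add_distrib])
    (fun c x y => by simp [Finset.mul_sum, mul_assoc])
    (fun x y y' => by simp [mul_add, Finset.sum_add_distrib])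
    (fun c x y => by simp [Finset.mul_sum]; congr 1; ext i; ring)

lemma dotB_apply (x y : Fin k → ZMod p) : dotB p k x y = ∑ i, x i * y i := rfl

lemma dotB_symm : (dotB p k).IsSymm := by
  refine ⟨fun x y => ?_⟩
  simp only [dotB_apply, RingHom.id_apply]
  exact Finset.sum_congr rfl fun i _ => mul_comm _ _

lemma dotB_nondeg : (dotB p k).Nondegenerate := by
  constructor
  · intro x hx
    funext i
    have := hx (Pi.single i 1)
    simpa [dotB_apply, Pi.single_apply, Finset.sum_ite_eq', mul_comm] using this
  · intro x hx
    funext i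
    have := hx (Pi.single i 1)
    simpa [dotB_apply, Pi.single_apply, Finset.sum_ite_eq', mul_comm] using this

lemma phik_eq (u v : Fin k → ZMod p × ZMod p) :
    Phik p k u v = dotB p k (xc p k u) (yc p k v - yc p k u) := by
  simp [Phik, dotB_apply, xc, yc]

end Aux

theorem card_maximalUnlinked (p k : ℕ) (hp : p.Prime) (hk : 1 ≤ k)
    (U : Set (Fin k → ZMod p × ZMod p)) (hU : MaximalUnlinked p k U) :
    Nat.card U = p ^ k := by
  haveI : Fact p.Prime := ⟨hp⟩
  -- U is nonempty
  have hne : U.Nonempty := by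
    by_contra h
    have hUe : U = ∅ := Set.not_nonempty_iff_eq_empty.mp h
    have hul : Unlinked p k {w | ∀ i, (w i).1 = 0} := by
      intro u hu v _
      have hu' : ∀ i, (u i).1 = 0 := hu
      simp [Phik, hu']
    have heq := hU.2 _ hul (by rw [hUe]; exact Set.empty_subset _)
    have hmem : (fun _ : Fin k => ((0 : ZMod p), (0 : ZMod p))) ∈ U := by
      rw [← heq]; intro i; rfl
    rw [hUe] at hmem
    exact hmem
  obtain ⟨u0, hu0⟩ := hne
  -- the span of differences of second components
  set W : Submodule (ZMod p) (Fin k → ZMod p) :=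
    Submodule.span (ZMod p) {d | ∃ v ∈ U, d = yc p k v - yc p k u0} with hW
  set W' : Submodule (ZMod p) (Fin k → ZMod p) := (dotB p k).orthogonal W with hW'
  set V : Set (Fin k → ZMod p × ZMod p) :=
    {w | xc p k w ∈ W' ∧ yc p k w - yc p k u0 ∈ W} with hV
  -- V is unlinked
  have hVu : Unlinked p k V := by
    rintro u ⟨hu1, hu2⟩ v ⟨_, hv2⟩
    rw [phik_eq]
    have hmem : yc p k v - yc p k u ∈ W := by
      have h : yc p k v - yc p k u
          = (yc p k v - yc p k u0) - (yc p k u - yc p k u0) := by abel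
      rw [h]; exact W.sub_mem hv2 hu2
    have h2 := hu1 _ hmem
    have h3 := (dotB_symm p k).ortho_comm.mp h2
    exact h3
  -- U ⊆ V
  have hUV : U ⊆ V := by
    intro u hu
    constructor
    · -- xc u ∈ W'
      rw [hW']
      intro n hn
      have hle : W ≤ LinearMap.ker ((dotB p k).flip (xc p k u)) := by
        rw [hW, Submodule.span_le]
        rintro d ⟨v, hv, rfl⟩
        simp only [SetLike.mem_coe, LinearMap.mem_ker, LinearMap.flip_apply]
        have h1 := hU.1 u hu v hv
        have h2 := hU.1 u hu u0 hu0
        rw [phik_eq] at h1 h2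
        have h3 : dotB p k (xc p k u) (yc p k v - yc p k u0)
            = dotB p k (xc p k u) (yc p k v - yc p k u)
              - dotB p k (xc p k u) (yc p k u0 - yc p k u) := by
          rw [← map_sub]; congr 1; abel
        have h4 : dotB p k (xc p k u) (yc p k v - yc p k u0) = 0 := by
          rw [h3, h1, h2, sub_zero]
        show dotB p k (yc p k v - yc p k u0) (xc p k u) = 0
        exact (dotB_symm p k).ortho_comm.mp h4
      have h4 := hle hn
      simpa using h4
    · exact Submodule.subset_span ⟨u, hu, rfl⟩
  have hVU : V = U := hU.2 V hVu hUV
  -- cardinality of V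
  have e : V ≃ W' × W :=
    { toFun := fun w => (⟨xc p k w.1, w.2.1⟩, ⟨yc p k w.1 - yc p k u0, w.2.2⟩)
      invFun := fun ab =>
        ⟨fun i => ((ab.1 : Fin k → ZMod p) i, (ab.2 : Fin k → ZMod p) i + (u0 i).2), by
          constructor
          · exact ab.1.2
          · have h : yc p k (fun i => ((ab.1 : Fin k → ZMod p) i,
                (ab.2 : Fin k → ZMod p) i + (u0 i).2)) - yc p k u0
                = (ab.2 : Fin k → ZMod p) := by
              funext i; simp [yc]
            rw [h]; exact ab.2.2⟩
      left_inv := by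
        rintro ⟨w, hw⟩
        ext i
        · rfl
        · show (yc p k w - yc p k u0) i + (u0 i).2 = (w i).2
          simp [yc]
      right_inv := by
        rintro ⟨a, b⟩
        ext i
        · rfl
        · show (yc p k (fun i => ((a : Fin k → ZMod p) i,
              (b : Fin k → ZMod p) i + (u0 i).2)) - yc p k u0) i = (b : Fin k → ZMod p) i
          simp [yc] }
  have hfr : Module.finrank (ZMod p) W + Module.finrank (ZMod p) W' = k := by
    have h1 := LinearMap.BilinForm.finrank_orthogonal (dotB_nondeg p k)
      W
    have h2 : Module.finrank (ZMod p) (Fin k → ZMod p) = k :=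
      Module.finrank_fin_fun (ZMod p)
    have h3 : Module.finrank (ZMod p) W ≤ Module.finrank (ZMod p) (Fin k → ZMod p) :=
      Submodule.finrank_le W
    rw [← hW', h2] at h1
    rw [h2] at h3
    omega
  have cardW : Nat.card W = p ^ Module.finrank (ZMod p) W := by
    haveI : Fintype W := Fintype.ofFinite W
    rw [Nat.card_eq_fintype_card, Module.card_eq_pow_finrank (K := ZMod p), ZMod.card]
  have cardW' : Nat.card W' = p ^ Module.finrank (ZMod p) W' := by
    haveI : Fintype W' := Fintype.ofFinite W'
    rw [Nat.card_eq_fintype_card, Module.card_eq_pow_finrank (K := ZMod p), ZMod.card]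
  calc Nat.card U = Nat.card V := by rw [hVU]
    _ = Nat.card (W' × W) := Nat.card_congr e
    _ = Nat.card W' * Nat.card W := Nat.card_prod _ _
    _ = p ^ (Module.finrank (ZMod p) W' + Module.finrank (ZMod p) W) := by
        rw [cardW, cardW', pow_add]
    _ = p ^ k := by rw [Nat.add_comm, hfr]
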